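/- For the big Coppersmith–Winograd tensor CW_q, the maximum over distributions P on its support of the average marginal entropy, restricted by symmetry to distributions assigning probability x to each of (0,i,i),(i,0,i),(i,i,0) for i ∈ [q] and 1/3 − qx to each of (0,0,q+1),(0,q+1,0),(q+1,0,0), equals the maximum of f_q(x) = −(2/3 − qx)log₂(2/3 − qx) − 2qx·log₂(2x) − (1/3 − qx)log₂(1/3 − qx) over x ∈ [0, 1/(3q)], and for q ≥ 3 this maximum is attained at x* = (3q − √(32+q²))/(6(q²−4)). -/

import Mathlib

open scoped BigOperators

/-- A 3-tensor over a field `F`, given by its dimensions and coordinate array. -/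
structure Tensor (F : Type) [Field F] where
  n1 : ℕ
  n2 : ℕ
  n3 : ℕ
  val : Fin n1 → Fin n2 → Fin n3 → F

namespace Tensor

variable {F : Type} [Field F]

/-- `Restricts t s` means `t ≥ s`: there are linear maps on the three factors mapping `t` to `s`. -/
def Restricts (t s : Tensor F) : Prop :=
  ∃ (A1 : Matrix (Fin s.n1) (Fin t.n1) F) (A2 : Matrix (Fin s.n2) (Fin t.n2) F)
    (A3 : Matrix (Fin s.n3) (Fin t.n3) F),
    ∀ a b c, s.val a b c =
      ∑ i, ∑ j, ∑ k, A1 a i * A2 b j * A3 c k * t.val i j k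

/-- Kronecker (tensor) product of two 3-tensors. -/
def tmul (t s : Tensor F) : Tensor F :=
  ⟨t.n1 * s.n1, t.n2 * s.n2, t.n3 * s.n3, fun a b c =>
    t.val (finProdFinEquiv.symm a).1 (finProdFinEquiv.symm b).1 (finProdFinEquiv.symm c).1 *
    s.val (finProdFinEquiv.symm a).2 (finProdFinEquiv.symm b).2 (finProdFinEquiv.symm c).2⟩

/-- The trivial `1×1×1` tensor. -/
def unit : Tensor F := ⟨1, 1, 1, fun _ _ _ => 1⟩

/-- Kronecker power. -/
def tpow (t : Tensor F) : ℕ → Tensor F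
  | 0 => unit
  | n + 1 => tmul (tpow t n) t

/-- The rank-`n` diagonal (unit) tensor `⟨n⟩`. -/
def diag (n : ℕ) : Tensor F :=
  ⟨n, n, n, fun i j k => if i = j ∧ j = k then 1 else 0⟩

/-- The matrix multiplication tensor `⟨a,b,c⟩`. -/
def mm (a b c : ℕ) : Tensor F :=
  ⟨a * b, b * c, c * a, fun x y z =>
    if (finProdFinEquiv.symm x).1 = (finProdFinEquiv.symm z).2 ∧
       (finProdFinEquiv.symm x).2 = (finProdFinEquiv.symm y).1 ∧
       (finProdFinEquiv.symm y).2 = (finProdFinEquiv.symm z).1 then 1 else 0⟩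

/-- A tensor is simple if it is of the form `u ⊗ v ⊗ w`. -/
def IsSimple (t : Tensor F) : Prop :=
  ∃ (u : Fin t.n1 → F) (v : Fin t.n2 → F) (w : Fin t.n3 → F),
    ∀ i j k, t.val i j k = u i * v j * w k

/-- Tensor rank. -/
noncomputable def rank (t : Tensor F) : ℕ := sInf {n | Restricts (diag n) t}

/-- Subrank. -/
noncomputable def subrank (t : Tensor F) : ℕ := sSup {n | Restricts t (diag n)}

/-- Asymptotic rank `Q̃(t) = lim R(t^{⊗n})^{1/n} = inf_n R(t^{⊗n})^{1/n}`. -/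
noncomputable def asympRank (t : Tensor F) : ℝ :=
  ⨅ n : ℕ+, (rank (tpow t n) : ℝ) ^ ((n : ℝ)⁻¹)

/-- Asymptotic subrank `Q(t) = lim Q(t^{⊗n})^{1/n} = sup_n Q(t^{⊗n})^{1/n}`. -/
noncomputable def asympSubrank (t : Tensor F) : ℝ :=
  ⨆ n : ℕ+, (subrank (tpow t n) : ℝ) ^ ((n : ℝ)⁻¹)

/-- `relexpSeq t s n = min { m : t^{⊗m} ≥ s^{⊗n} }`. -/
noncomputable def relexpSeq (t s : Tensor F) (n : ℕ) : ℕ :=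
  sInf {m | Restricts (tpow t m) (tpow s n)}

/-- Relative exponent `ω(t,s) = lim_n (1/n) min{m : t^{⊗m} ≥ s^{⊗n}} = sup_n ...`. -/
noncomputable def relexp (t s : Tensor F) : ℝ :=
  ⨆ n : ℕ+, (relexpSeq t s n : ℝ) / (n : ℝ)

/-- Irreversibility, as the product of relative exponents. -/
noncomputable def irr (t : Tensor F) : ℝ := relexp (diag 2) t * relexp t (diag 2)

/-- Irreversibility, as a ratio of logarithms. -/
noncomputable def irrL (t : Tensor F) : ℝ :=
  Real.logb 2 (asympRank t) / Real.logb 2 (asympSubrank t)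

/-- First flattening of a tensor, an `n1 × (n2·n3)` matrix. -/
def flatten1 (t : Tensor F) : Matrix (Fin t.n1) (Fin t.n2 × Fin t.n3) F :=
  fun a p => t.val a p.1 p.2

/-- Second flattening. -/
def flatten2 (t : Tensor F) : Matrix (Fin t.n2) (Fin t.n1 × Fin t.n3) F :=
  fun b p => t.val p.1 b p.2

/-- Third flattening. -/
def flatten3 (t : Tensor F) : Matrix (Fin t.n3) (Fin t.n1 × Fin t.n2) F :=
  fun c p => t.val p.1 p.2 c

end Tensor

/-- Shannon entropy (base 2). -/
noncomputable def entH {m : ℕ} (p : Fin m → ℝ) : ℝ :=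
  ∑ i, -(p i * Real.logb 2 (p i))

/-- The function `f_q` from the analysis of `CW_q`. -/
noncomputable def fCW (q : ℕ) (x : ℝ) : ℝ :=
  -(2/3 - q * x) * Real.logb 2 (2/3 - q * x) - q * (2 * x) * Real.logb 2 (2 * x)
    - (1/3 - q * x) * Real.logb 2 (1/3 - q * x)

/-- The marginal distribution of the symmetric distribution on the support of
`CW_q` which puts weight `x` on each of `(0,i,i),(i,0,i),(i,i,0)` and `1/3 − qx`
on each of `(0,0,q+1),(0,q+1,0),(q+1,0,0)`. -/
noncomputable def cwMarginal (q : ℕ) (x : ℝ) : Fin (q + 2) → ℝ :=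
  fun i => if (i : ℕ) = 0 then 2/3 - q * x
    else if (i : ℕ) = q + 1 then 1/3 - q * x else 2 * x

section Aux

open Real Set

lemma auxContMulLogb : Continuous (fun t : ℝ => t * Real.logb 2 t) := by
  have h := Real.continuous_mul_log.div_const (Real.log 2)
  convert h using 1
  funext t
  simp only [Real.logb]
  ring

lemma auxEntH_cwMarginal (q : ℕ) (x : ℝ) : entH (cwMarginal q x) = fCW q x := by
  classical
  set A : ℝ := -((2/3 - (q:ℝ) * x) * Real.logb 2 (2/3 - (q:ℝ) * x)) with hA
  set B : ℝ := -((1/3 - (q:ℝ) * x) * Real.logb 2 (1/3 - (q:ℝ) * x)) with hB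
  set C : ℝ := -((2 * x) * Real.logb 2 (2 * x)) with hC
  have key : ∀ i : Fin (q + 2), -(cwMarginal q x i * Real.logb 2 (cwMarginal q x i)) =
      C + (if (i : ℕ) = 0 then A - C else 0) + (if (i : ℕ) = q + 1 then B - C else 0) := by
    intro i
    unfold cwMarginal
    split_ifs with h1 h2 <;> simp_all
  have hsum : entH (cwMarginal q x) =
      ∑ i : Fin (q + 2), (C + (if (i : ℕ) = 0 then A - C else 0)
        + (if (i : ℕ) = q + 1 then B - C else 0)) := by
    unfold entH
    exact Finset.sum_congr rfl (fun i _ => key i)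
  rw [hsum]
  rw [Fin.sum_univ_eq_sum_range
    (fun i => (C + (if i = 0 then A - C else 0) + (if i = q + 1 then B - C else 0))) (q + 2)]
  rw [Finset.sum_add_distrib, Finset.sum_add_distrib, Finset.sum_const]
  rw [Finset.sum_ite_eq' (Finset.range (q + 2)) 0 (fun _ => A - C)]
  rw [Finset.sum_ite_eq' (Finset.range (q + 2)) (q + 1) (fun _ => B - C)]
  have h0 : (0 : ℕ) ∈ Finset.range (q + 2) := by simp
  have h1 : (q + 1 : ℕ) ∈ Finset.range (q + 2) := by simp
  simp only [h0, h1, if_true, Finset.card_range, nsmul_eq_mul]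
  unfold fCW
  rw [hA, hB, hC]
  push_cast
  ring

lemma auxHasDerivAt_fCW (q : ℕ) (hq : 3 ≤ q) {x : ℝ} (hx0 : 0 < x)
    (hxa : x < 1 / (3 * (q:ℝ))) :
    HasDerivAt (fCW q)
      (((q:ℝ) * (Real.log (2/3 - (q:ℝ) * x) + Real.log (1/3 - (q:ℝ) * x)
        - 2 * Real.log (2 * x))) / Real.log 2) x := by
  have hc : (3:ℝ) ≤ (q:ℝ) := by exact_mod_cast hq
  have hc0 : (0:ℝ) < (q:ℝ) := by linarith
  have hqx : (q:ℝ) * x < 1/3 := by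
    rw [lt_div_iff₀ (by positivity)] at hxa
    nlinarith
  have hu1 : (0:ℝ) < 2/3 - (q:ℝ) * x := by linarith
  have hu3 : (0:ℝ) < 1/3 - (q:ℝ) * x := by linarith
  have h2x : (0:ℝ) < 2 * x := by linarith
  have haff1 : HasDerivAt (fun y : ℝ => 2/3 - (q:ℝ) * y) (-(q:ℝ)) x := by
    simpa using ((hasDerivAt_id x).const_mul (q:ℝ)).const_sub (2/3 : ℝ)
  have haff3 : HasDerivAt (fun y : ℝ => 1/3 - (q:ℝ) * y) (-(q:ℝ)) x := by
    simpa using ((hasDerivAt_id x).const_mul (q:ℝ)).const_sub (1/3 : ℝ)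
  have haff2 : HasDerivAt (fun y : ℝ => 2 * y) (2:ℝ) x := by
    simpa using (hasDerivAt_id x).const_mul (2:ℝ)
  have h1 : HasDerivAt (fun y : ℝ => (2/3 - (q:ℝ) * y) * Real.log (2/3 - (q:ℝ) * y))
      ((Real.log (2/3 - (q:ℝ) * x) + 1) * (-(q:ℝ))) x :=
    ((Real.hasDerivAt_mul_log hu1.ne').comp x haff1 :)
  have h3 : HasDerivAt (fun y : ℝ => (1/3 - (q:ℝ) * y) * Real.log (1/3 - (q:ℝ) * y))
      ((Real.log (1/3 - (q:ℝ) * x) + 1) * (-(q:ℝ))) x :=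
    ((Real.hasDerivAt_mul_log hu3.ne').comp x haff3 :)
  have h2 : HasDerivAt (fun y : ℝ => (2 * y) * Real.log (2 * y))
      ((Real.log (2 * x) + 1) * 2) x :=
    (Real.hasDerivAt_mul_log h2x.ne').comp x haff2
  have H : HasDerivAt (fun y : ℝ =>
      (-((2/3 - (q:ℝ) * y) * Real.log (2/3 - (q:ℝ) * y))
        - (q:ℝ) * ((2 * y) * Real.log (2 * y))
        - (1/3 - (q:ℝ) * y) * Real.log (1/3 - (q:ℝ) * y)) / Real.log 2)
      ((-((Real.log (2/3 - (q:ℝ) * x) + 1) * (-(q:ℝ)))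
        - (q:ℝ) * ((Real.log (2 * x) + 1) * 2)
        - (Real.log (1/3 - (q:ℝ) * x) + 1) * (-(q:ℝ))) / Real.log 2) x :=
    ((h1.neg.sub (h2.const_mul (q:ℝ))).sub h3).div_const _
  have hfun : fCW q = (fun y : ℝ =>
      (-((2/3 - (q:ℝ) * y) * Real.log (2/3 - (q:ℝ) * y))
        - (q:ℝ) * ((2 * y) * Real.log (2 * y))
        - (1/3 - (q:ℝ) * y) * Real.log (1/3 - (q:ℝ) * y)) / Real.log 2) := by
    funext y
    unfold fCW
    simp only [Real.logb]
    ring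
  rw [hfun]
  convert H using 1
  ring

end Aux

set_option maxHeartbeats 1000000 in
open Set in
/-- the average marginal entropy of the symmetric distributions on
the support of `CW_q` equals `f_q(x)`, and for `q ≥ 3` the maximum of `f_q` over
`[0, 1/(3q)]` is attained (uniquely) at `x* = (3q − √(32+q²))/(6(q²−4))`. -/
theorem fCW_max (q : ℕ) (hq : 3 ≤ q) :
    (∀ x ∈ Icc (0:ℝ) (1 / (3 * q)), entH (cwMarginal q x) = fCW q x) ∧
    (let xs : ℝ := (3 * q - Real.sqrt (32 + q ^ 2)) / (6 * (q ^ 2 - 4))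
     xs ∈ Ioo (0:ℝ) (1 / (3 * q)) ∧
     IsMaxOn (fCW q) (Icc (0:ℝ) (1 / (3 * q))) xs ∧
     ∀ y ∈ Icc (0:ℝ) (1 / (3 * q)), y ≠ xs → fCW q y < fCW q xs) := by
  have hc : (3:ℝ) ≤ (q:ℝ) := by exact_mod_cast hq
  have hc0 : (0:ℝ) < (q:ℝ) := by linarith
  have hc4 : (0:ℝ) < (q:ℝ)^2 - 4 := by nlinarith
  set c : ℝ := (q:ℝ) with hcdef
  set s : ℝ := Real.sqrt (32 + c^2) with hsdef
  have hs0 : 0 ≤ s := Real.sqrt_nonneg _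
  have hs2 : s^2 = 32 + c^2 := Real.sq_sqrt (by positivity)
  have hs3c : s < 3*c := by
    rw [hsdef]
    rw [Real.sqrt_lt' (by positivity)]
    nlinarith
  have hs2' : c^2 * s^2 = c^2 * (32 + c^2) := by rw [hs2]
  have hkey : c^2 + 8 < c * s := by
    have h1 : (c^2 + 8)^2 < (c * s)^2 := by nlinarith [hs2', hc]
    exact lt_of_pow_lt_pow_left₀ 2 (by positivity) h1
  set xs : ℝ := (3*c - s) / (6*(c^2 - 4)) with hxsdef
  set a : ℝ := 1 / (3*c) with hadef
  have hD : (0:ℝ) < 6*(c^2 - 4) := by linarith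
  have hxs0 : 0 < xs := div_pos (by linarith) hD
  have hxsa : xs < a := by
    rw [hxsdef, hadef, div_lt_div_iff₀ hD (by positivity)]
    nlinarith [hkey]
  -- continuity of fCW
  have hcont : Continuous (fCW q) := by
    have g1 : Continuous (fun y : ℝ => (2/3 - c*y) * Real.logb 2 (2/3 - c*y)) :=
      auxContMulLogb.comp (continuous_const.sub (continuous_const.mul continuous_id))
    have g2 : Continuous (fun y : ℝ => (2*y) * Real.logb 2 (2*y)) :=
      auxContMulLogb.comp (continuous_const.mul continuous_id)
    have g3 : Continuous (fun y : ℝ => (1/3 - c*y) * Real.logb 2 (1/3 - c*y)) :=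
      auxContMulLogb.comp (continuous_const.sub (continuous_const.mul continuous_id))
    have : fCW q = fun y : ℝ =>
        -((2/3 - c*y) * Real.logb 2 (2/3 - c*y)) - c * ((2*y) * Real.logb 2 (2*y))
          - ((1/3 - c*y) * Real.logb 2 (1/3 - c*y)) := by
      funext y; unfold fCW; rw [hcdef]; ring
    rw [this]
    exact (g1.neg.sub (continuous_const.mul g2)).sub g3
  -- sign of the quadratic
  have hquadpos : ∀ x : ℝ, 0 < x → x < xs → 0 < (c^2-4)*x^2 - c*x + 2/9 := by
    intro x hx0 hxxs
    have hlt : x * (6*(c^2-4)) < 3*c - s := by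
      rw [hxsdef] at hxxs
      exact (lt_div_iff₀ hD).mp hxxs
    have hsq : s^2 < (3*c - x*(6*(c^2-4)))^2 :=
      pow_lt_pow_left₀ (by linarith) hs0 (by norm_num)
    nlinarith [hsq, hs2, hc4]
  have hquadneg : ∀ x : ℝ, xs < x → x < a → (c^2-4)*x^2 - c*x + 2/9 < 0 := by
    intro x hxxs hxa
    have hgt : 3*c - s < x * (6*(c^2-4)) := by
      rw [hxsdef] at hxxs
      exact (div_lt_iff₀ hD).mp hxxs
    have hxa' : x * (3*c) < 1 := by
      rw [hadef, lt_div_iff₀ (by positivity)] at hxa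
      linarith
    have hub : x * (6*(c^2-4)) - 3*c < s := by nlinarith
    have hsq : (x * (6*(c^2-4)) - 3*c)^2 < s^2 := sq_lt_sq' (by linarith) hub
    nlinarith [hsq, hs2, hc4]
  -- sign of the derivative
  have hderiv_pos : ∀ x : ℝ, 0 < x → x < xs → 0 < deriv (fCW q) x := by
    intro x hx0 hxxs
    have hxa : x < a := lt_trans hxxs hxsa
    have hxa2 : x < 1 / (3 * (q:ℝ)) := hxa
    rw [(auxHasDerivAt_fCW q hq hx0 hxa2).deriv]
    have hqx : c * x < 1/3 := by
      rw [hadef, lt_div_iff₀ (by positivity)] at hxa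
      nlinarith
    have hu1 : (0:ℝ) < 2/3 - c * x := by linarith
    have hu3 : (0:ℝ) < 1/3 - c * x := by linarith
    have h2x : (0:ℝ) < 2 * x := by linarith
    have hq2 := hquadpos x hx0 hxxs
    have hlog : Real.log ((2*x)*(2*x)) < Real.log ((2/3 - c*x) * (1/3 - c*x)) :=
      Real.log_lt_log (by positivity) (by nlinarith)
    rw [Real.log_mul h2x.ne' h2x.ne', Real.log_mul hu1.ne' hu3.ne'] at hlog
    have hlogsum : 0 < Real.log (2/3 - c*x) + Real.log (1/3 - c*x) - 2 * Real.log (2*x) := by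
      linarith
    exact div_pos (mul_pos hc0 hlogsum) (Real.log_pos (by norm_num))
  have hderiv_neg : ∀ x : ℝ, xs < x → x < a → deriv (fCW q) x < 0 := by
    intro x hxxs hxa
    have hx0 : 0 < x := lt_trans hxs0 hxxs
    have hxa2 : x < 1 / (3 * (q:ℝ)) := hxa
    rw [(auxHasDerivAt_fCW q hq hx0 hxa2).deriv]
    have hqx : c * x < 1/3 := by
      rw [hadef, lt_div_iff₀ (by positivity)] at hxa
      nlinarith
    have hu1 : (0:ℝ) < 2/3 - c * x := by linarith
    have hu3 : (0:ℝ) < 1/3 - c * x := by linarith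
    have h2x : (0:ℝ) < 2 * x := by linarith
    have hq2 := hquadneg x hxxs hxa
    have hlog : Real.log ((2/3 - c*x) * (1/3 - c*x)) < Real.log ((2*x)*(2*x)) :=
      Real.log_lt_log (by positivity) (by nlinarith)
    rw [Real.log_mul h2x.ne' h2x.ne', Real.log_mul hu1.ne' hu3.ne'] at hlog
    have hlogsum : Real.log (2/3 - c*x) + Real.log (1/3 - c*x) - 2 * Real.log (2*x) < 0 := by
      linarith
    exact div_neg_of_neg_of_pos (by nlinarith) (Real.log_pos (by norm_num))
  -- monotonicity
  have hmono : StrictMonoOn (fCW q) (Icc (0:ℝ) xs) := by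
    apply strictMonoOn_of_deriv_pos (convex_Icc _ _) hcont.continuousOn
    intro x hx
    rw [interior_Icc] at hx
    exact hderiv_pos x hx.1 hx.2
  have hanti : StrictAntiOn (fCW q) (Icc xs a) := by
    apply strictAntiOn_of_deriv_neg (convex_Icc _ _) hcont.continuousOn
    intro x hx
    rw [interior_Icc] at hx
    exact hderiv_neg x hx.1 hx.2
  have hstrict : ∀ y ∈ Icc (0:ℝ) a, y ≠ xs → fCW q y < fCW q xs := by
    intro y hy hne
    rcases lt_or_gt_of_ne hne with h | h
    · exact hmono ⟨hy.1, h.le⟩ ⟨hy.1.trans (le_of_lt h), le_refl _⟩ h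
    · exact hanti ⟨le_refl _, hxsa.le⟩ ⟨h.le, hy.2⟩ h
  refine ⟨fun x _ => auxEntH_cwMarginal q x, ⟨hxs0, hxsa⟩, ?_, hstrict⟩
  rw [isMaxOn_iff]
  intro y hy
  by_cases hne : y = xs
  · rw [hne]
  · exact (hstrict y hy hne).le
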